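/- In the Bayesian setup with countable M, prior w, mixture ξ, true μ ∈ M, and δ ∈ (0,1), define the plausible class M_t := {ν ∈ M : ∀τ ≤ t, ν(ω_{<τ})/ξ(ω_{<τ}) ≥ δ·w_μ/w_ν} and ĥ_t := sup_{ν∈M_t} (w_ν/w_μ)·h_t(ν,ξ). Then with μ-probability at least 1−δ, h_t(μ,ξ) ≤ ĥ_t for all t simultaneously. -/

import Mathlib

open MeasureTheory ENNReal

/-- The cylinder set of a finite string `x`: infinite sequences beginning with `x`. -/
def cyl {A : Type*} (x : List A) : Set (ℕ → A) :=
  {ω | ∀ i : Fin x.length, ω i = x.get i}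

/-- `mass μ x` is the `μ`-probability of the cylinder set of `x`. -/
noncomputable def mass {A : Type*} [MeasurableSpace A] (μ : Measure (ℕ → A)) (x : List A) : ℝ :=
  (μ (cyl x)).toReal

/-- One-step predictive probability `μ(a | x)`. -/
noncomputable def condP {A : Type*} [MeasurableSpace A] (μ : Measure (ℕ → A)) (x : List A)
    (a : A) : ℝ :=
  mass μ (x ++ [a]) / mass μ x

/-- Squared Hellinger distance between the one-step predictive distributions given `x`. -/
noncomputable def hellSq {A : Type*} [MeasurableSpace A] (μ ξ : Measure (ℕ → A))
    (x : List A) : ℝ :=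
  ∑' a : A, (Real.sqrt (condP μ x a) - Real.sqrt (condP ξ x a)) ^ 2

/-- KL divergence between the one-step predictive distributions given `x`. -/
noncomputable def klDiv' {A : Type*} [MeasurableSpace A] (μ ξ : Measure (ℕ → A))
    (x : List A) : ℝ :=
  ∑' a : A, condP μ x a * Real.log (condP μ x a / condP ξ x a)

/-- The prefix `ω_{<t+1}` of length `t` of an infinite sequence. -/
def pre {A : Type*} (ω : ℕ → A) (t : ℕ) : List A := (List.range t).map ω

set_option linter.unusedSectionVars false

section Atoms
variable {A : Type*} [MeasurableSpace A] [Countable A]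

/-- `relA a b`: no measurable set separates `a` from `b`. -/
def relA (a b : A) : Prop := ∀ S : Set A, MeasurableSet S → a ∈ S → b ∈ S

lemma relA_refl (a : A) : relA a a := fun _ _ h => h
lemma relA_symm {a b : A} (h : relA a b) : relA b a := by
  intro S hS hb; by_contra ha; exact (h Sᶜ hS.compl ha) hb
lemma relA_trans {a b c : A} (h1 : relA a b) (h2 : relA b c) : relA a c :=
  fun S hS ha => h2 S hS (h1 S hS ha)

/-- The measurable atom of `a`. -/
def atomA (a : A) : Set A := {b | relA a b}

lemma mem_atomA_self (a : A) : a ∈ atomA a := relA_refl a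
lemma atomA_eq_of_mem {a b : A} (h : b ∈ atomA a) : atomA a = atomA b := by
  ext c; exact ⟨fun hc => relA_trans (relA_symm h) hc, fun hc => relA_trans h hc⟩
lemma measurableSet_atomA (a : A) : MeasurableSet (atomA a) := by
  have hsep : ∀ b : A, ¬ relA a b → ∃ S : Set A, MeasurableSet S ∧ a ∈ S ∧ b ∉ S := by
    intro b hb; by_contra h; push_neg at h
    exact hb (fun S hS ha => h S hS ha)
  choose! S hS using hsep
  have : atomA a = ⋂ (b : A) (_ : ¬ relA a b), S b := by
    ext c
    constructor
    · exact fun hc => Set.mem_iInter₂.2 fun b hb => hc (S b) (hS b hb).1 (hS b hb).2.1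
    · intro hc; by_contra hrel
      exact (hS c hrel).2.2 (Set.mem_iInter₂.1 hc c hrel)
  rw [this]
  exact MeasurableSet.iInter fun b => MeasurableSet.iInter fun hb => (hS b hb).1

/-- Saturation: closedness under coordinatewise atom-equivalence. -/
def satP (t : Set (ℕ → A)) : Prop :=
  ∀ ω ∈ t, ∀ ω' : ℕ → A, (∀ i, relA (ω i) (ω' i)) → ω' ∈ t

lemma sat_of_measurableSet {t : Set (ℕ → A)} (ht : MeasurableSet t) : satP t := by
  let m' : MeasurableSpace (ℕ → A) :=
    { MeasurableSet' := satP
      measurableSet_empty := fun ω hω => hω.elim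
      measurableSet_compl := by
        intro s hs ω hω ω' hrel hω'
        exact hω (hs ω' hω' ω (fun i => relA_symm (hrel i)))
      measurableSet_iUnion := by
        intro f hf ω hω ω' hrel
        obtain ⟨j, hj⟩ := Set.mem_iUnion.1 hω
        exact Set.mem_iUnion.2 ⟨j, hf j ω hj ω' hrel⟩ }
  have hle : (MeasurableSpace.pi : MeasurableSpace (ℕ → A)) ≤ m' := by
    refine iSup_le fun i => ?_
    rintro t ⟨S, hS, rfl⟩
    intro ω hω ω' hrel
    exact hrel i S hS hω
  exact hle t ht

/-- Hull cylinder determined by a list of atoms. -/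
def HcylL (L : List (Set A)) : Set (ℕ → A) := {ω | ∀ i, ∀ h : i < L.length, ω i ∈ L[i]}

/-- The measurable hull of the cylinder of `x`. -/
def Hcyl (x : List A) : Set (ℕ → A) := HcylL (x.map atomA)

lemma mem_Hcyl {x : List A} {ω : ℕ → A} :
    ω ∈ Hcyl x ↔ ∀ i, ∀ h : i < x.length, ω i ∈ atomA x[i] := by
  constructor
  · intro hω i h
    have := hω i (by simpa using h)
    simpa using this
  · intro hω i h
    rw [List.length_map] at h
    simpa using hω i h

lemma measurableSet_Hcyl (x : List A) : MeasurableSet (Hcyl x) := by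
  have : Hcyl x = ⋂ i : Fin x.length, (fun ω : ℕ → A => ω i) ⁻¹' atomA x[(i : ℕ)] := by
    ext ω
    simp only [Set.mem_iInter, Set.mem_preimage, mem_Hcyl]
    exact ⟨fun h i => h i i.isLt, fun h i hi => h ⟨i, hi⟩⟩
  rw [this]
  exact MeasurableSet.iInter fun i =>
    (measurable_pi_apply (i : ℕ)) (measurableSet_atomA _)

lemma cyl_subset_Hcyl (x : List A) : cyl x ⊆ Hcyl x := by
  intro ω hω
  rw [mem_Hcyl]
  intro i h
  have := hω ⟨i, h⟩
  rw [this]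
  exact mem_atomA_self _

lemma Hcyl_subset {x : List A} {t : Set (ℕ → A)} (ht : MeasurableSet t)
    (hsub : cyl x ⊆ t) : Hcyl x ⊆ t := by
  intro ω' hω'
  classical
  set ω : ℕ → A := fun i => if h : i < x.length then x[i] else ω' i with hωdef
  have hωcyl : ω ∈ cyl x := by
    intro i
    show ω (i : ℕ) = x.get i
    simp [hωdef, i.isLt]
  refine sat_of_measurableSet ht ω (hsub hωcyl) ω' fun i => ?_
  by_cases h : i < x.length
  · have : ω i = x[i] := by simp [hωdef, h]
    rw [this]
    exact mem_Hcyl.1 hω' i h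
  · have : ω i = ω' i := by simp [hωdef, h]
    rw [this]
    exact relA_refl _

lemma measure_cyl_eq (μ : Measure (ℕ → A)) (x : List A) : μ (cyl x) = μ (Hcyl x) := by
  refine le_antisymm (measure_mono (cyl_subset_Hcyl x)) ?_
  rw [measure_eq_iInf (cyl x)]
  exact le_iInf fun t => le_iInf fun hsub => le_iInf fun hmeas =>
    measure_mono (Hcyl_subset hmeas hsub)

lemma mass_eq_Hcyl (μ : Measure (ℕ → A)) (x : List A) : mass μ x = (μ (Hcyl x)).toReal := by
  rw [mass, measure_cyl_eq]

lemma Hcyl_take_of_mem {x y : List A} (hlen : x.length ≤ y.length) {ω : ℕ → A}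
    (hx : ω ∈ Hcyl x) (hy : ω ∈ Hcyl y) : Hcyl x = Hcyl (y.take x.length) := by
  have hmap : x.map atomA = (y.take x.length).map atomA := by
    refine List.ext_getElem (by simp [hlen]) ?_
    intro i h1 h2
    have hix : i < x.length := by simpa using h1
    have hiy : i < y.length := lt_of_lt_of_le hix hlen
    simp only [List.getElem_map, List.getElem_take]
    have e1 : ω i ∈ atomA x[i] := mem_Hcyl.1 hx i hix
    have e2 : ω i ∈ atomA y[i] := mem_Hcyl.1 hy i hiy
    rw [atomA_eq_of_mem e1, atomA_eq_of_mem e2]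
  rw [Hcyl, Hcyl, hmap]

end Atoms

lemma pre_length {A : Type*} (ω : ℕ → A) (t : ℕ) : (pre ω t).length = t := by
  simp [pre]

lemma pre_take {A : Type*} (ω : ℕ → A) {m t : ℕ} (h : m ≤ t) :
    (pre ω t).take m = pre ω m := by
  simp [pre, ← List.map_take, List.take_range, Nat.min_eq_left h]

lemma pre_zero {A : Type*} (ω : ℕ → A) : pre ω 0 = [] := by simp [pre]

lemma cyl_nil {A : Type*} : cyl ([] : List A) = Set.univ := by
  ext ω
  refine ⟨fun _ => trivial, fun _ i => i.elim0⟩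

lemma mem_cyl_pre {A : Type*} (ω : ℕ → A) (t : ℕ) : ω ∈ cyl (pre ω t) := by
  intro i
  rw [List.get_eq_getElem]
  simp [pre]

/-- Ville-type inequality. -/
lemma ville {A : Type*} [MeasurableSpace A] [Countable A]
    (μ ξ : Measure (ℕ → A)) [IsProbabilityMeasure μ] [IsProbabilityMeasure ξ]
    (hdom : ∀ s : Set (ℕ → A), MeasurableSet s → ξ s = 0 → μ s = 0)
    (δ : ℝ) (hδ0 : 0 < δ) :
    μ {ω | ∃ t, ¬ (δ ≤ mass μ (pre ω t) / mass ξ (pre ω t))} ≤ ENNReal.ofReal δ := by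
  classical
  set bad : List A → Prop := fun x => ¬ (δ ≤ mass μ x / mass ξ x) with hbad
  set S : Set (List A) := {x | bad x ∧ ∀ m < x.length, ¬ bad (x.take m)} with hS
  -- badness depends only on the hull
  have bad_congr : ∀ x z : List A, Hcyl x = Hcyl z → bad x → bad z := by
    intro x z he hb
    have h1 : mass μ x = mass μ z := by rw [mass_eq_Hcyl, mass_eq_Hcyl, he]
    have h2 : mass ξ x = mass ξ z := by rw [mass_eq_Hcyl, mass_eq_Hcyl, he]
    show ¬ (δ ≤ mass μ z / mass ξ z)
    rw [← h1, ← h2]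
    exact hb
  -- cover by minimal bad hull cylinders
  have hcover : {ω : ℕ → A | ∃ t, ¬ (δ ≤ mass μ (pre ω t) / mass ξ (pre ω t))} ⊆
      ⋃₀ (Hcyl '' S) := by
    intro ω hω
    have hex : ∃ t, bad (pre ω t) := hω
    set t₀ := Nat.find hex with ht₀
    refine Set.mem_sUnion.2 ⟨Hcyl (pre ω t₀), ⟨pre ω t₀, ?_, rfl⟩,
      cyl_subset_Hcyl _ (mem_cyl_pre ω t₀)⟩
    refine ⟨Nat.find_spec hex, ?_⟩
    intro m hm
    rw [pre_length] at hm
    rw [pre_take ω hm.le]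
    exact Nat.find_min hex hm
  -- hulls of elements of S are pairwise equal or disjoint
  have hdisj : (Hcyl '' S).Pairwise Disjoint := by
    rintro h1 ⟨x, hxS, rfl⟩ h2 ⟨y, hyS, rfl⟩ hne
    rw [Set.disjoint_left]
    intro ω hωx hωy
    refine hne ?_
    -- wlog-free symmetric argument
    have key : ∀ x y : List A, x ∈ S → y ∈ S → x.length ≤ y.length →
        ω ∈ Hcyl x → ω ∈ Hcyl y → Hcyl x = Hcyl y := by
      intro x y hxS hyS hlen hx hy
      have htake := Hcyl_take_of_mem hlen hx hy
      rcases lt_or_eq_of_le hlen with hlt | heq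
      · exact absurd (bad_congr x (y.take x.length) htake hxS.1)
          (hyS.2 x.length (by omega))
      · rw [htake, heq, List.take_length]
    rcases le_total x.length y.length with hlen | hlen
    · exact key x y hxS hyS hlen hωx hωy
    · exact (key y x hyS hxS hlen hωy hωx).symm
  -- per-element bound
  have hbound : ∀ h ∈ Hcyl '' S, μ h ≤ ENNReal.ofReal δ * ξ h := by
    rintro h ⟨x, hxS, rfl⟩
    have hb : mass μ x / mass ξ x < δ := not_le.1 hxS.1
    by_cases hz : ξ (Hcyl x) = 0
    · rw [hz, mul_zero, hdom _ (measurableSet_Hcyl x) hz]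
    · have hfin : ξ (Hcyl x) ≠ ⊤ := measure_ne_top ξ _
      have hq : 0 < mass ξ x := by
        rw [mass_eq_Hcyl ξ]; exact ENNReal.toReal_pos hz hfin
      have hmm : mass μ x < δ * mass ξ x := (div_lt_iff₀ hq).1 hb
      have hμfin : μ (Hcyl x) ≠ ⊤ := measure_ne_top μ _
      calc μ (Hcyl x) = ENNReal.ofReal ((μ (Hcyl x)).toReal) := (ENNReal.ofReal_toReal hμfin).symm
        _ ≤ ENNReal.ofReal (δ * (ξ (Hcyl x)).toReal) := by
            apply ENNReal.ofReal_le_ofReal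
            rw [mass_eq_Hcyl μ, mass_eq_Hcyl ξ] at hmm
            exact hmm.le
        _ = ENNReal.ofReal δ * ENNReal.ofReal ((ξ (Hcyl x)).toReal) :=
            ENNReal.ofReal_mul hδ0.le
        _ = ENNReal.ofReal δ * ξ (Hcyl x) := by rw [ENNReal.ofReal_toReal hfin]
  -- put it together
  have hcount : (Hcyl '' S).Countable := (Set.to_countable S).image _
  have hHmeas : ∀ h ∈ Hcyl '' S, MeasurableSet h := by
    rintro h ⟨x, _, rfl⟩; exact measurableSet_Hcyl x
  calc μ {ω : ℕ → A | ∃ t, ¬ (δ ≤ mass μ (pre ω t) / mass ξ (pre ω t))}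
      ≤ μ (⋃₀ (Hcyl '' S)) := measure_mono hcover
    _ ≤ ∑' h : (Hcyl '' S), μ h := by
        haveI := hcount.to_subtype
        rw [Set.sUnion_eq_iUnion]
        exact measure_iUnion_le _
    _ ≤ ∑' h : (Hcyl '' S), ENNReal.ofReal δ * ξ h :=
        ENNReal.tsum_le_tsum fun h => hbound h h.2
    _ = ENNReal.ofReal δ * ∑' h : (Hcyl '' S), ξ h := ENNReal.tsum_mul_left
    _ = ENNReal.ofReal δ * ξ (⋃₀ (Hcyl '' S)) := by
        rw [measure_sUnion hcount hdisj hHmeas]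
    _ ≤ ENNReal.ofReal δ * 1 := by
        exact mul_le_mul_right (prob_le_one) _
    _ = ENNReal.ofReal δ := mul_one _

open Classical in
/-- With `μ`-probability at least `1-δ`, simultaneously for all `t`, the predictive squared
Hellinger error `h_t(μ,ξ)` is bounded by
`ĥ_t = sup_{ν ∈ M_t} (w_ν/w_μ)·h_t(ν,ξ)`, the sup being over the plausible class
`M_t = {ν : ∀ τ ≤ t, ν(ω_{<τ})/ξ(ω_{<τ}) ≥ δ·w_μ/w_ν}`. -/
theorem stmt17 {A ι : Type*} [MeasurableSpace A] [Countable A] [Countable ι]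
    (ν : ι → Measure (ℕ → A)) (hν : ∀ i, IsProbabilityMeasure (ν i))
    (w : ι → ℝ) (hw : ∀ i, 0 < w i) (hwsum : ∑' i, w i = 1)
    (ξ : Measure (ℕ → A)) (hξ : ξ = Measure.sum (fun i => ENNReal.ofReal (w i) • ν i))
    (i₀ : ι) (δ : ℝ) (hδ : δ ∈ Set.Ioo (0 : ℝ) 1) :
    1 - ENNReal.ofReal δ ≤
      ν i₀ {ω | ∀ t, hellSq (ν i₀) ξ (pre ω t) ≤
        ⨆ i, if (∀ m ≤ t, δ * w i₀ / w i ≤ mass (ν i) (pre ω m) / mass ξ (pre ω m))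
          then (w i / w i₀) * hellSq (ν i) ξ (pre ω t) else 0} := by
  obtain ⟨hδ0, hδ1⟩ := hδ
  have hw0 : (0:ℝ) < w i₀ := hw i₀
  have hSummable : Summable w := by
    by_contra h
    rw [tsum_eq_zero_of_not_summable h] at hwsum
    norm_num at hwsum
  haveI : IsProbabilityMeasure (ν i₀) := hν i₀
  have hξuniv : ξ Set.univ = 1 := by
    rw [hξ, Measure.sum_apply _ MeasurableSet.univ]
    simp only [Measure.smul_apply, smul_eq_mul, measure_univ, mul_one]
    rw [← ENNReal.ofReal_tsum_of_nonneg (fun i => (hw i).le) hSummable, hwsum,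
      ENNReal.ofReal_one]
  haveI hξp : IsProbabilityMeasure ξ := ⟨hξuniv⟩
  have hdom : ∀ s : Set (ℕ → A), MeasurableSet s → ξ s = 0 → ν i₀ s = 0 := by
    intro s hs h0
    have hle : ENNReal.ofReal (w i₀) * ν i₀ s ≤ ξ s := by
      rw [hξ, Measure.sum_apply _ hs]
      calc ENNReal.ofReal (w i₀) * ν i₀ s = (ENNReal.ofReal (w i₀) • ν i₀) s := by
            rw [Measure.smul_apply, smul_eq_mul]
        _ ≤ ∑' i, (ENNReal.ofReal (w i) • ν i) s := ENNReal.le_tsum i₀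
    rw [h0, nonpos_iff_eq_zero, mul_eq_zero] at hle
    rcases hle with h | h
    · exact absurd h (by simp [ENNReal.ofReal_eq_zero, not_le, hw0])
    · exact h
  set G : Set (ℕ → A) := {ω | ∀ t, δ ≤ mass (ν i₀) (pre ω t) / mass ξ (pre ω t)} with hG
  have hGc : ν i₀ Gᶜ ≤ ENNReal.ofReal δ := by
    have hv := ville (ν i₀) ξ hdom δ hδ0
    have : Gᶜ = {ω : ℕ → A | ∃ t, ¬ (δ ≤ mass (ν i₀) (pre ω t) / mass ξ (pre ω t))} := by
      ext ω
      simp [hG, not_forall]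
    rwa [this]
  have hGbound : 1 - ENNReal.ofReal δ ≤ ν i₀ G := by
    refine tsub_le_iff_right.2 ?_
    calc (1:ℝ≥0∞) = ν i₀ Set.univ := measure_univ.symm
      _ = ν i₀ (G ∪ Gᶜ) := by rw [Set.union_compl_self]
      _ ≤ ν i₀ G + ν i₀ Gᶜ := measure_union_le _ _
      _ ≤ ν i₀ G + ENNReal.ofReal δ := add_le_add le_rfl hGc
  refine le_trans hGbound (measure_mono ?_)
  intro ω hω t
  have hmass_nil : ∀ μ' : Measure (ℕ → A), IsProbabilityMeasure μ' → mass μ' ([] : List A) = 1 := by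
    intro μ' hμ'
    rw [mass, cyl_nil, measure_univ, ENNReal.toReal_one]
  -- finiteness of plausible indices
  have hT : {i : ι | δ * w i₀ ≤ w i}.Finite := by
    have h0 : 0 < δ * w i₀ := mul_pos hδ0 hw0
    have hmem : w ⁻¹' (Set.Iio (δ * w i₀)) ∈ Filter.cofinite :=
      hSummable.tendsto_cofinite_zero (Iio_mem_nhds h0)
    rw [Filter.mem_cofinite] at hmem
    refine hmem.subset ?_
    intro i hi
    simp only [Set.mem_compl_iff, Set.mem_preimage, Set.mem_Iio, not_lt]
    exact hi
  have hbdd : BddAbove (Set.range fun i =>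
      if (∀ m ≤ t, δ * w i₀ / w i ≤ mass (ν i) (pre ω m) / mass ξ (pre ω m))
        then (w i / w i₀) * hellSq (ν i) ξ (pre ω t) else 0) := by
    refine BddAbove.mono ?_ ((hT.image fun i =>
      if (∀ m ≤ t, δ * w i₀ / w i ≤ mass (ν i) (pre ω m) / mass ξ (pre ω m))
        then (w i / w i₀) * hellSq (ν i) ξ (pre ω t) else 0).insert 0).bddAbove
    rintro r ⟨i, rfl⟩
    by_cases hc : ∀ m ≤ t, δ * w i₀ / w i ≤ mass (ν i) (pre ω m) / mass ξ (pre ω m)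
    · refine Set.mem_insert_of_mem _ ⟨i, ?_, rfl⟩
      have h0 := hc 0 (Nat.zero_le t)
      rw [pre_zero, hmass_nil (ν i) (hν i), hmass_nil ξ hξp] at h0
      have : δ * w i₀ / w i ≤ 1 := by simpa using h0
      exact (div_le_one (hw i)).1 this
    · simp only [if_neg hc]
      exact Set.mem_insert _ _
  have hcond : ∀ m ≤ t, δ * w i₀ / w i₀ ≤ mass (ν i₀) (pre ω m) / mass ξ (pre ω m) := by
    intro m _
    rw [mul_div_assoc, div_self hw0.ne', mul_one]
    exact hω m
  refine le_trans ?_ (le_ciSup hbdd i₀)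
  rw [if_pos hcond, div_self hw0.ne', one_mul]
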